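/- (Localization) Let g = S[g₀, g₁] where g₀, g₁ : ℤ × Fin 2^(m-1) → ℝ are supported in the trapezoid {(h,s) : −s ≤ h ≤ 2^n − 1}, and S[g₀,g₁](h,2t) = g₀(h,t) + g₁(h+t,t), S[g₀,g₁](h,2t+1) = g₀(h,t) + g₁(h+t+1,t). Then g = Σ_{q,p} g₀(p,q)·φ_{p,q} + Σ_{q,p} g₁(p+q,q)·ψ_{p,q} lies in the span of {φ_{p,q} : −q ≤ p ≤ 2^n−1} ∪ {ψ_{p,q} : −2q ≤ p ≤ 2^n−q−1}. Moreover, if g lies in the span of the φ's alone then g₁ = 0, and if g lies in the span of the ψ's alone then g₀ = 0. -/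

import Mathlib

/-- An image on the half-strip: support bounded below in the first coordinate. -/
def BddBelowSupp {k : ℕ} (f : ℤ × Fin k → ℝ) : Prop :=
  ∃ b : ℤ, ∀ i ≤ b, ∀ j, f (i, j) = 0

/-- Halving of a slope index: local slope of the sub-section. -/
def halfIdx {m : ℕ} (s : Fin (2 ^ (m + 1))) : Fin (2 ^ m) :=
  ⟨s.val / 2, by have h1 := s.isLt; have h2 : 2 ^ (m + 1) = 2 ^ m * 2 := pow_succ 2 m; omega⟩

/-- Doubling of a slope index (even slope). -/
def dbl0 {m : ℕ} (s : Fin (2 ^ m)) : Fin (2 ^ (m + 1)) :=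
  ⟨2 * s.val, by have h1 := s.isLt; have h2 : 2 ^ (m + 1) = 2 ^ m * 2 := pow_succ 2 m; omega⟩

/-- Doubling of a slope index, plus one (odd slope). -/
def dbl1 {m : ℕ} (s : Fin (2 ^ m)) : Fin (2 ^ (m + 1)) :=
  ⟨2 * s.val + 1, by have h1 := s.isLt; have h2 : 2 ^ (m + 1) = 2 ^ m * 2 := pow_succ 2 m; omega⟩

/-- The single-level ADRT merge operator `S`:
`S[f₀,f₁](h,2t) = f₀(h,t) + f₁(h+t,t)` and `S[f₀,f₁](h,2t+1) = f₀(h,t) + f₁(h+t+1,t)`. -/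
def Smerge (m : ℕ) (f₀ f₁ : ℤ × Fin (2 ^ m) → ℝ) : ℤ × Fin (2 ^ (m + 1)) → ℝ :=
  fun p =>
    f₀ (p.1, halfIdx p.2) +
      f₁ (p.1 + ((halfIdx p.2).val : ℤ) + ((p.2.val % 2 : ℕ) : ℤ), halfIdx p.2)

/-- The Kronecker delta image concentrated at `(h, s)`. -/
def deltaImg {k : ℕ} (h : ℤ) (s : Fin k) : ℤ × Fin k → ℝ :=
  fun p => if p = (h, s) then 1 else 0

/-- `φ_{p,q} = δ_{p,2q} + δ_{p,2q+1}`. -/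
def phiImg {m : ℕ} (p : ℤ) (q : Fin (2 ^ m)) : ℤ × Fin (2 ^ (m + 1)) → ℝ :=
  fun x => deltaImg p (dbl0 q) x + deltaImg p (dbl1 q) x

/-- `ψ_{p,q} = δ_{p,2q} + δ_{p−1,2q+1}`. -/
def psiImg {m : ℕ} (p : ℤ) (q : Fin (2 ^ m)) : ℤ × Fin (2 ^ (m + 1)) → ℝ :=
  fun x => deltaImg p (dbl0 q) x + deltaImg (p - 1) (dbl1 q) x

lemma phi_apply {m : ℕ} (p : ℤ) (q : Fin (2 ^ m)) (x : ℤ × Fin (2 ^ (m + 1))) :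
    phiImg p q x = if x.1 = p ∧ halfIdx x.2 = q then 1 else 0 := by
  obtain ⟨h, s⟩ := x
  simp only [phiImg, deltaImg, Prod.mk.injEq, halfIdx, dbl0, dbl1, Fin.ext_iff]
  by_cases hp : h = p
  · rcases eq_or_ne s.val (2 * q.val) with he | he
    · rw [if_pos ⟨hp, he⟩, if_neg (fun hc => absurd hc.2 (by omega)), if_pos ⟨hp, by omega⟩]
      norm_num
    · rcases eq_or_ne s.val (2 * q.val + 1) with ho | ho
      · rw [if_neg (fun hc => absurd hc.2 (by omega)), if_pos ⟨hp, ho⟩, if_pos ⟨hp, by omega⟩]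
        norm_num
      · rw [if_neg (fun hc => he hc.2), if_neg (fun hc => ho hc.2),
          if_neg (fun hc => absurd hc.2 (by omega))]
        norm_num
  · rw [if_neg (fun hc => hp hc.1), if_neg (fun hc => hp hc.1), if_neg (fun hc => hp hc.1)]
    norm_num

lemma psi_apply {m : ℕ} (p : ℤ) (q : Fin (2 ^ m)) (x : ℤ × Fin (2 ^ (m + 1))) :
    psiImg p q x = if x.1 + ((x.2.val % 2 : ℕ) : ℤ) = p ∧ halfIdx x.2 = q then 1 else 0 := by
  obtain ⟨h, s⟩ := x
  simp only [psiImg, deltaImg, Prod.mk.injEq, halfIdx, dbl0, dbl1, Fin.ext_iff]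
  rcases eq_or_ne s.val (2 * q.val) with he | he
  · by_cases hp : h = p
    · rw [if_pos ⟨hp, he⟩, if_neg (fun hc => absurd hc.2 (by omega)),
        if_pos ⟨by omega, by omega⟩]
      norm_num
    · rw [if_neg (fun hc => hp hc.1), if_neg (fun hc => absurd hc.2 (by omega)),
        if_neg (fun hc => hp (by have := hc.1; omega))]
      norm_num
  · rcases eq_or_ne s.val (2 * q.val + 1) with ho | ho
    · by_cases hp : h = p - 1
      · rw [if_neg (fun hc => absurd hc.2 (by omega)), if_pos ⟨hp, ho⟩,
          if_pos ⟨by omega, by omega⟩]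
        norm_num
      · rw [if_neg (fun hc => absurd hc.2 (by omega)), if_neg (fun hc => hp hc.1),
          if_neg (fun hc => hp (by have := hc.1; omega))]
        norm_num
    · rw [if_neg (fun hc => he hc.2), if_neg (fun hc => ho hc.2),
        if_neg (fun hc => absurd hc.2 (by omega))]
      norm_num

lemma halfIdx_dbl0 {m : ℕ} (q : Fin (2 ^ m)) : halfIdx (dbl0 q) = q := by
  simp only [halfIdx, dbl0, Fin.ext_iff]; omega
lemma halfIdx_dbl1 {m : ℕ} (q : Fin (2 ^ m)) : halfIdx (dbl1 q) = q := by
  simp only [halfIdx, dbl1, Fin.ext_iff]; omega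
lemma mod_dbl0 {m : ℕ} (q : Fin (2 ^ m)) : (dbl0 q).val % 2 = 0 := by
  simp only [dbl0]; omega
lemma mod_dbl1 {m : ℕ} (q : Fin (2 ^ m)) : (dbl1 q).val % 2 = 1 := by
  simp only [dbl1]; omega

lemma part1 (m : ℕ) (g₀ g₁ : ℤ × Fin (2 ^ m) → ℝ) (x : ℤ × Fin (2 ^ (m + 1))) :
    Smerge m g₀ g₁ x
      = ∑ᶠ pq : ℤ × Fin (2 ^ m),
          (g₀ (pq.1, pq.2) * phiImg pq.1 pq.2 x
            + g₁ (pq.1 + ((pq.2 : ℕ) : ℤ), pq.2) * psiImg pq.1 pq.2 x) := by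
  set t := halfIdx x.2 with ht
  set e := ((x.2.val % 2 : ℕ) : ℤ) with he
  set A : ℤ × Fin (2 ^ m) := (x.1, t) with hA
  set B : ℤ × Fin (2 ^ m) := (x.1 + e, t) with hB
  have hs0 : ∀ pq : ℤ × Fin (2 ^ m), pq ≠ A →
      g₀ (pq.1, pq.2) * phiImg pq.1 pq.2 x = 0 := by
    intro pq hne
    rw [phi_apply, if_neg, mul_zero]
    exact fun hc => hne (Prod.ext_iff.mpr ⟨hc.1.symm, hc.2.symm⟩)
  have hs1 : ∀ pq : ℤ × Fin (2 ^ m), pq ≠ B →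
      g₁ (pq.1 + ((pq.2 : ℕ) : ℤ), pq.2) * psiImg pq.1 pq.2 x = 0 := by
    intro pq hne
    rw [psi_apply, if_neg, mul_zero]
    exact fun hc => hne (Prod.ext_iff.mpr ⟨hc.1.symm, hc.2.symm⟩)
  have hf0 : (Function.support fun pq : ℤ × Fin (2 ^ m) =>
      g₀ (pq.1, pq.2) * phiImg pq.1 pq.2 x).Finite :=
    (Set.finite_singleton A).subset (Function.support_subset_iff'.2 fun pq h => hs0 pq h)
  have hf1 : (Function.support fun pq : ℤ × Fin (2 ^ m) =>
      g₁ (pq.1 + ((pq.2 : ℕ) : ℤ), pq.2) * psiImg pq.1 pq.2 x).Finite :=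
    (Set.finite_singleton B).subset (Function.support_subset_iff'.2 fun pq h => hs1 pq h)
  rw [finsum_add_distrib hf0 hf1, finsum_eq_single _ A hs0, finsum_eq_single _ B hs1]
  rw [phi_apply, psi_apply]
  rw [if_pos ⟨rfl, rfl⟩, if_pos ⟨rfl, rfl⟩]
  simp only [Smerge, mul_one, hA, hB]
  ring_nf
  rw [ht, he, add_right_comm x.1 (((halfIdx x.2 : Fin _) : ℕ) : ℤ)]

lemma part2 (n m : ℕ) (g₀ g₁ : ℤ × Fin (2 ^ m) → ℝ)
    (h₀ : ∀ (p : ℤ) (q : Fin (2 ^ m)), g₀ (p, q) ≠ 0 →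
      -((q : ℕ) : ℤ) ≤ p ∧ p ≤ (2 ^ n : ℤ) - 1)
    (h₁ : ∀ (p : ℤ) (q : Fin (2 ^ m)), g₁ (p, q) ≠ 0 →
      -((q : ℕ) : ℤ) ≤ p ∧ p ≤ (2 ^ n : ℤ) - 1) :
    Smerge m g₀ g₁ ∈ Submodule.span ℝ
        ({f : ℤ × Fin (2 ^ (m + 1)) → ℝ |
            ∃ (p : ℤ) (q : Fin (2 ^ m)),
              -((q : ℕ) : ℤ) ≤ p ∧ p ≤ (2 ^ n : ℤ) - 1 ∧ f = phiImg p q} ∪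
          {f : ℤ × Fin (2 ^ (m + 1)) → ℝ |
            ∃ (p : ℤ) (q : Fin (2 ^ m)),
              -(2 * (q : ℕ) : ℤ) ≤ p ∧ p ≤ (2 ^ n : ℤ) - 1 - (q : ℕ) ∧
                f = psiImg p q}) := by
  classical
  set T : Finset (ℤ × Fin (2 ^ m)) :=
    Finset.Icc (-(2 ^ (m + 1) : ℤ)) (2 ^ n) ×ˢ Finset.univ with hT
  have key : Smerge m g₀ g₁ = ∑ pq ∈ T,
      (g₀ (pq.1, pq.2) • phiImg pq.1 pq.2
        + g₁ (pq.1 + ((pq.2 : ℕ) : ℤ), pq.2) • psiImg pq.1 pq.2) := by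
    funext x
    rw [part1 m g₀ g₁ x]
    have hsub : (Function.support fun pq : ℤ × Fin (2 ^ m) =>
        g₀ (pq.1, pq.2) * phiImg pq.1 pq.2 x
          + g₁ (pq.1 + ((pq.2 : ℕ) : ℤ), pq.2) * psiImg pq.1 pq.2 x) ⊆ (T : Set _) := by
      intro pq hpq
      have hor : g₀ (pq.1, pq.2) ≠ 0 ∨ g₁ (pq.1 + ((pq.2 : ℕ) : ℤ), pq.2) ≠ 0 := by
        by_contra hcon
        push_neg at hcon
        apply hpq
        simp [hcon.1, hcon.2]
      have hq : ((pq.2 : ℕ) : ℤ) < 2 ^ m := by exact_mod_cast pq.2.isLt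
      have hq0 : (0 : ℤ) ≤ ((pq.2 : ℕ) : ℤ) := Int.ofNat_nonneg _
      have hpow : (2 : ℤ) ^ (m + 1) = 2 * 2 ^ m := by ring
      have hpn : (0 : ℤ) < 2 ^ n := by positivity
      simp only [hT, Finset.coe_product, Set.mem_prod, Finset.mem_coe, Finset.mem_Icc,
        Finset.mem_univ, and_true, Finset.coe_univ, Set.mem_univ]
      rcases hor with hg | hg
      · have := h₀ _ _ hg
        constructor <;> omega
      · have := h₁ _ _ hg
        constructor <;> omega
    rw [finsum_eq_finset_sum_of_support_subset _ hsub]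
    simp only [Finset.sum_apply, Pi.add_apply, Pi.smul_apply, smul_eq_mul]
  rw [key]
  apply Submodule.sum_mem
  intro pq _
  apply Submodule.add_mem
  · by_cases hz : g₀ (pq.1, pq.2) = 0
    · simp [hz]
    · exact Submodule.smul_mem _ _ (Submodule.subset_span
        (Or.inl ⟨pq.1, pq.2, (h₀ _ _ hz).1, (h₀ _ _ hz).2, rfl⟩))
  · by_cases hz : g₁ (pq.1 + ((pq.2 : ℕ) : ℤ), pq.2) = 0
    · simp [hz]
    · refine Submodule.smul_mem _ _ (Submodule.subset_span
        (Or.inr ⟨pq.1, pq.2, ?_, ?_, rfl⟩))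
      · have := (h₁ _ _ hz).1; omega
      · have := (h₁ _ _ hz).2; omega

lemma part3 (n m : ℕ) (g₀ g₁ : ℤ × Fin (2 ^ m) → ℝ)
    (h₁ : ∀ (p : ℤ) (q : Fin (2 ^ m)), g₁ (p, q) ≠ 0 →
      -((q : ℕ) : ℤ) ≤ p ∧ p ≤ (2 ^ n : ℤ) - 1)
    (hmem : Smerge m g₀ g₁ ∈ Submodule.span ℝ
        {f : ℤ × Fin (2 ^ (m + 1)) → ℝ |
          ∃ (p : ℤ) (q : Fin (2 ^ m)),
            -((q : ℕ) : ℤ) ≤ p ∧ p ≤ (2 ^ n : ℤ) - 1 ∧ f = phiImg p q}) :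
    g₁ = 0 := by
  -- step: g₁ is invariant under shifting the first coordinate by 1
  have step : ∀ (z : ℤ) (t : Fin (2 ^ m)), g₁ (z, t) = g₁ (z + 1, t) := by
    intro z t
    set L : (ℤ × Fin (2 ^ (m + 1)) → ℝ) →ₗ[ℝ] ℝ :=
      LinearMap.proj (R := ℝ) (φ := fun _ : ℤ × Fin (2 ^ (m + 1)) => ℝ) (z - (t : ℕ), dbl0 t)
        - LinearMap.proj (z - (t : ℕ), dbl1 t) with hL
    have hker : ∀ f ∈ {f : ℤ × Fin (2 ^ (m + 1)) → ℝ |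
        ∃ (p : ℤ) (q : Fin (2 ^ m)),
          -((q : ℕ) : ℤ) ≤ p ∧ p ≤ (2 ^ n : ℤ) - 1 ∧ f = phiImg p q},
        f ∈ LinearMap.ker L := by
      rintro f ⟨p, q, -, -, rfl⟩
      simp only [LinearMap.mem_ker, hL, LinearMap.sub_apply, LinearMap.proj_apply]
      rw [phi_apply, phi_apply]
      simp only [halfIdx_dbl0, halfIdx_dbl1, sub_self]
    have h0 : L (Smerge m g₀ g₁) = 0 :=
      Submodule.span_le.mpr hker hmem
    simp only [hL, LinearMap.sub_apply, LinearMap.proj_apply, Smerge,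
      halfIdx_dbl0, halfIdx_dbl1, mod_dbl0, mod_dbl1, Nat.cast_zero, Nat.cast_one,
      add_zero] at h0
    have hz : z - ((t : ℕ) : ℤ) + ((t : ℕ) : ℤ) = z := by ring
    rw [hz] at h0
    linarith [h0]
  have mono : ∀ (k : ℕ) (z : ℤ) (t : Fin (2 ^ m)), g₁ (z, t) = g₁ (z + k, t) := by
    intro k
    induction k with
    | zero => simp
    | succ k ih =>
      intro z t
      rw [ih z t, step (z + k) t]
      push_cast
      ring_nf
  funext pq
  obtain ⟨z, t⟩ := pq
  by_contra hnz
  have hb := h₁ z t hnz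
  set k : ℕ := ((2 : ℤ) ^ n - z).toNat with hk
  have hk' : (k : ℤ) = (2 : ℤ) ^ n - z := Int.toNat_of_nonneg (by omega)
  have hgk : g₁ ((2 : ℤ) ^ n, t) ≠ 0 := by
    have := mono k z t
    rw [show z + (k : ℤ) = (2 : ℤ) ^ n by omega] at this
    rw [← this]
    exact hnz
  have := h₁ _ _ hgk
  omega

lemma part4 (n m : ℕ) (g₀ g₁ : ℤ × Fin (2 ^ m) → ℝ)
    (h₀ : ∀ (p : ℤ) (q : Fin (2 ^ m)), g₀ (p, q) ≠ 0 →
      -((q : ℕ) : ℤ) ≤ p ∧ p ≤ (2 ^ n : ℤ) - 1)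
    (hmem : Smerge m g₀ g₁ ∈ Submodule.span ℝ
        {f : ℤ × Fin (2 ^ (m + 1)) → ℝ |
          ∃ (p : ℤ) (q : Fin (2 ^ m)),
            -(2 * (q : ℕ) : ℤ) ≤ p ∧ p ≤ (2 ^ n : ℤ) - 1 - (q : ℕ) ∧
              f = psiImg p q}) :
    g₀ = 0 := by
  have step : ∀ (z : ℤ) (t : Fin (2 ^ m)), g₀ (z, t) = g₀ (z + 1, t) := by
    intro z t
    set L : (ℤ × Fin (2 ^ (m + 1)) → ℝ) →ₗ[ℝ] ℝ :=
      LinearMap.proj (R := ℝ) (φ := fun _ : ℤ × Fin (2 ^ (m + 1)) => ℝ) (z + 1, dbl0 t)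
        - LinearMap.proj (z, dbl1 t) with hL
    have hker : ∀ f ∈ {f : ℤ × Fin (2 ^ (m + 1)) → ℝ |
        ∃ (p : ℤ) (q : Fin (2 ^ m)),
          -(2 * (q : ℕ) : ℤ) ≤ p ∧ p ≤ (2 ^ n : ℤ) - 1 - (q : ℕ) ∧ f = psiImg p q},
        f ∈ LinearMap.ker L := by
      rintro f ⟨p, q, -, -, rfl⟩
      simp only [LinearMap.mem_ker, hL, LinearMap.sub_apply, LinearMap.proj_apply]
      rw [psi_apply, psi_apply]
      simp only [halfIdx_dbl0, halfIdx_dbl1, mod_dbl0, mod_dbl1, Nat.cast_zero, Nat.cast_one,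
        add_zero]
      rw [show z + 1 = z + 1 from rfl]
      norm_num
    have h0 : L (Smerge m g₀ g₁) = 0 :=
      Submodule.span_le.mpr hker hmem
    simp only [hL, LinearMap.sub_apply, LinearMap.proj_apply, Smerge,
      halfIdx_dbl0, halfIdx_dbl1, mod_dbl0, mod_dbl1, Nat.cast_zero, Nat.cast_one,
      add_zero] at h0
    have hz : z + ((t : ℕ) : ℤ) + 1 = z + 1 + ((t : ℕ) : ℤ) := by ring
    rw [hz] at h0
    linarith [h0]
  have mono : ∀ (k : ℕ) (z : ℤ) (t : Fin (2 ^ m)), g₀ (z, t) = g₀ (z + k, t) := by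
    intro k
    induction k with
    | zero => simp
    | succ k ih =>
      intro z t
      rw [ih z t, step (z + k) t]
      push_cast
      ring_nf
  funext pq
  obtain ⟨z, t⟩ := pq
  by_contra hnz
  have hb := h₀ z t hnz
  set k : ℕ := ((2 : ℤ) ^ n - z).toNat with hk
  have hk' : (k : ℤ) = (2 : ℤ) ^ n - z := Int.toNat_of_nonneg (by omega)
  have hgk : g₀ ((2 : ℤ) ^ n, t) ≠ 0 := by
    have := mono k z t
    rw [show z + (k : ℤ) = (2 : ℤ) ^ n by omega] at this
    rw [← this]
    exact hnz
  have := h₀ _ _ hgk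
  omega

/-- Localization: if `g = S[g₀,g₁]` with `g₀, g₁` supported in the trapezoid
`{(h,s) : −s ≤ h ≤ 2^n−1}`, then `g = Σ g₀(p,q)·φ_{p,q} + Σ g₁(p+q,q)·ψ_{p,q}`
lies in the span of `{φ_{p,q} : −q ≤ p ≤ 2^n−1} ∪ {ψ_{p,q} : −2q ≤ p ≤ 2^n−q−1}`;
moreover if `g` lies in the span of the `φ`'s alone then `g₁ = 0`, and if `g`
lies in the span of the `ψ`'s alone then `g₀ = 0`. -/
theorem Smerge_localization (n m : ℕ) (g₀ g₁ : ℤ × Fin (2 ^ m) → ℝ)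
    (h₀ : ∀ (p : ℤ) (q : Fin (2 ^ m)), g₀ (p, q) ≠ 0 →
      -((q : ℕ) : ℤ) ≤ p ∧ p ≤ (2 ^ n : ℤ) - 1)
    (h₁ : ∀ (p : ℤ) (q : Fin (2 ^ m)), g₁ (p, q) ≠ 0 →
      -((q : ℕ) : ℤ) ≤ p ∧ p ≤ (2 ^ n : ℤ) - 1) :
    (∀ x : ℤ × Fin (2 ^ (m + 1)),
        Smerge m g₀ g₁ x
          = ∑ᶠ pq : ℤ × Fin (2 ^ m),
              (g₀ (pq.1, pq.2) * phiImg pq.1 pq.2 x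
                + g₁ (pq.1 + ((pq.2 : ℕ) : ℤ), pq.2) * psiImg pq.1 pq.2 x)) ∧
    Smerge m g₀ g₁ ∈ Submodule.span ℝ
        ({f : ℤ × Fin (2 ^ (m + 1)) → ℝ |
            ∃ (p : ℤ) (q : Fin (2 ^ m)),
              -((q : ℕ) : ℤ) ≤ p ∧ p ≤ (2 ^ n : ℤ) - 1 ∧ f = phiImg p q} ∪
          {f : ℤ × Fin (2 ^ (m + 1)) → ℝ |
            ∃ (p : ℤ) (q : Fin (2 ^ m)),
              -(2 * (q : ℕ) : ℤ) ≤ p ∧ p ≤ (2 ^ n : ℤ) - 1 - (q : ℕ) ∧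
                f = psiImg p q}) ∧
    (Smerge m g₀ g₁ ∈ Submodule.span ℝ
        {f : ℤ × Fin (2 ^ (m + 1)) → ℝ |
          ∃ (p : ℤ) (q : Fin (2 ^ m)),
            -((q : ℕ) : ℤ) ≤ p ∧ p ≤ (2 ^ n : ℤ) - 1 ∧ f = phiImg p q} →
      g₁ = 0) ∧
    (Smerge m g₀ g₁ ∈ Submodule.span ℝ
        {f : ℤ × Fin (2 ^ (m + 1)) → ℝ |
          ∃ (p : ℤ) (q : Fin (2 ^ m)),
            -(2 * (q : ℕ) : ℤ) ≤ p ∧ p ≤ (2 ^ n : ℤ) - 1 - (q : ℕ) ∧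
              f = psiImg p q} →
      g₀ = 0) := by
  exact ⟨part1 m g₀ g₁, part2 n m g₀ g₁ h₀ h₁, part3 n m g₀ g₁ h₁, part4 n m g₀ g₁ h₀⟩
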